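/- Let h_m(n, q, r) denote the number of compositions of n into r positive parts with at most m parts exceeding q (q ≥ 1). Then ∑_{r=1}^{n} (-1)^r * C(r - 1, p - 1) * h_m(n, q, r) = ∑_{j=⌈(n-p)/(q+1)⌉}^{⌊(n-p)/q⌋} (-1)^{n + m + q*j + j} * C(j - 1, m) * C(n - q*j - 1, p - 1) * C(p, n - q*j - j), with the j = 0 term (when p = n) interpreted via (-1)^j C(j-1, m)|_{j=0} = (-1)^m. -/

import Mathlib

/-- The compositions of `n` into `r` positive parts, as a `Finset` of tuples. -/
def compositions (n r : ℕ) : Finset (Fin r → ℕ) :=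
  (Fintype.piFinset fun _ => Finset.range (n + 1)).filter
    fun c => (∀ i, 0 < c i) ∧ ∑ i, c i = n

/-- `hm n q r m` is the number of compositions of `n` into `r` positive parts with at most
`m` parts exceeding `q`. -/
def hm (n q r m : ℕ) : ℕ :=
  ((compositions n r).filter
    fun c => (Finset.univ.filter fun i => q < c i).card ≤ m).card

/-- Integer-valued binomial coefficient with the convention `C(a, b) = 0` when `b < 0`
or `b > a`. -/
def chZ (a b : ℤ) : ℤ := if 0 ≤ b ∧ b ≤ a then (a.toNat.choose b.toNat : ℤ) else 0

open PowerSeries Finset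

noncomputable section
abbrev RR := Polynomial ℤ
def uu : RR := 1 - Polynomial.X

def Ps (q : ℕ) : PowerSeries RR :=
  PowerSeries.mk fun a => if a = 0 then 0 else if a ≤ q then 1 else Polynomial.X

def Gs (q : ℕ) : PowerSeries RR :=
  PowerSeries.mk fun a => if (q+1) ∣ a then uu ^ (a/(q+1)) else 0

def Hs (q : ℕ) : PowerSeries RR := (1 - PowerSeries.X) * Gs q - 1

lemma coeff_Gs (q a : ℕ) :
    PowerSeries.coeff (R := RR) a (Gs q) = if (q+1) ∣ a then uu ^ (a/(q+1)) else 0 := by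
  simp [Gs]

lemma Gs_eq (q : ℕ) : (1 + PowerSeries.C (R := RR) uu * (PowerSeries.X^(q+1) * Gs q)) = Gs q := by
  apply PowerSeries.ext; intro a
  rw [map_add, PowerSeries.coeff_C_mul, PowerSeries.coeff_X_pow_mul']
  rcases lt_or_ge a (q+1) with h | h
  · rw [if_neg (by omega), mul_zero, add_zero, coeff_Gs]
    rcases Nat.eq_zero_or_pos a with rfl | ha
    · simp
    · have hnd : ¬ (q+1) ∣ a := fun hd => by have := Nat.le_of_dvd ha hd; omega
      rw [if_neg hnd, PowerSeries.coeff_one, if_neg (by omega)]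
  · rw [if_pos h, coeff_Gs, coeff_Gs, PowerSeries.coeff_one, if_neg (by omega)]
    by_cases hd : (q+1) ∣ a
    · obtain ⟨c, hc0⟩ := hd
      have hc : 1 ≤ c := by nlinarith [hc0]
      obtain ⟨d, rfl⟩ : ∃ d, c = d + 1 := ⟨c - 1, by omega⟩
      subst hc0
      have h1 : (q+1)*(d+1) - (q+1) = (q+1)*d := by
        rw [Nat.mul_add, Nat.mul_one, Nat.add_sub_cancel]
      rw [h1, if_pos ⟨d, rfl⟩, if_pos ⟨d+1, rfl⟩]
      rw [Nat.mul_div_cancel_left _ (by omega), Nat.mul_div_cancel_left _ (by omega)]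
      rw [zero_add, ← pow_succ']
    · have hnd2 : ¬ (q+1) ∣ (a - (q+1)) := fun h2 => hd (by
        obtain ⟨c, hc⟩ := h2; exact ⟨c+1, by rw [Nat.mul_add, Nat.mul_one]; omega⟩)
      rw [if_neg hnd2, if_neg hd, mul_zero, zero_add]


lemma coeff_Ps (q a : ℕ) :
    PowerSeries.coeff (R := RR) a (Ps q) = if a = 0 then 0 else if a ≤ q then 1 else Polynomial.X := by
  simp [Ps]

lemma oneSub_mul (q : ℕ) (hq : 1 ≤ q) :
    (1 - PowerSeries.X) * (1 + Ps q) = 1 - PowerSeries.C (R := RR) uu * PowerSeries.X^(q+1) := by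
  have key : (1 - PowerSeries.X : PowerSeries RR) * (1 + Ps q)
      = 1 + Ps q - X^1 * (1 + Ps q) := by ring
  apply PowerSeries.ext; intro a
  rw [key, map_sub, PowerSeries.coeff_X_pow_mul']
  simp only [map_add, map_sub, PowerSeries.coeff_one, coeff_Ps, PowerSeries.coeff_C_mul_X_pow]
  split_ifs <;> (try (exfalso; omega)) <;> simp [uu] <;> ring

lemma oneAdd_Ps_mul_Hs (q : ℕ) (hq : 1 ≤ q) : (1 + Ps q) * Hs q = - Ps q := by
  have h1 := Gs_eq q
  have h2 := oneSub_mul q hq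
  have h3 : (1 - PowerSeries.C (R := RR) uu * PowerSeries.X^(q+1)) * Gs q = 1 := by
    linear_combination -h1
  have : (1 + Ps q) * Hs q = (1 - PowerSeries.C (R := RR) uu * PowerSeries.X^(q+1)) * Gs q - (1 + Ps q) := by
    rw [Hs]; rw [← h2]; ring
  rw [this, h3]; ring

lemma Hs_eq (q : ℕ) :
    Hs q = - (PowerSeries.X * ((1 - PowerSeries.C (R := RR) uu * PowerSeries.X^q) * Gs q)) := by
  rw [Hs]
  linear_combination -(Gs_eq q)

lemma sum_multiples {M : Type*} [AddCommMonoid M] (d a : ℕ) (hd : 0 < d) (f : ℕ → M)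
    (hf : ∀ i, ¬ d ∣ i → f i = 0) :
    ∑ i ∈ range (a+1), f i = ∑ j ∈ range (a/d + 1), f (d*j) := by
  rw [← Finset.sum_filter_of_ne (p := fun i => d ∣ i) (by
    intro x _ hx; by_contra hc; exact hx (hf x hc))]
  apply Finset.sum_nbij' (fun i => i/d) (fun j => d*j)
  · intro i hi
    simp only [Finset.mem_filter, Finset.mem_range] at hi ⊢
    have := Nat.div_le_div_right (c := d) (by omega : i ≤ a)
    omega
  · intro j hj
    simp only [Finset.mem_filter, Finset.mem_range] at hj ⊢
    constructor
    · have h1 : d * j ≤ d * (a/d) := Nat.mul_le_mul_left d (by omega)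
      have h2 := Nat.div_mul_le_self a d
      have h3 : d * (a/d) = a/d*d := Nat.mul_comm _ _
      omega
    · exact ⟨j, rfl⟩
  · intro i hi
    simp only [Finset.mem_filter] at hi
    exact Nat.mul_div_cancel' hi.2
  · intro j hj
    exact Nat.mul_div_cancel_left j hd
  · intro i hi
    simp only [Finset.mem_filter] at hi
    rw [Nat.mul_div_cancel' hi.2]

lemma hockey (p J : ℕ) (hp : 1 ≤ p) :
    ∑ M ∈ range (J+1), Nat.choose (M+p-1) (p-1) = Nat.choose (J+p) p := by
  have h := Nat.sum_Icc_choose (J+p-1) (p-1)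
  rw [← Finset.Ico_add_one_right_eq_Icc, Finset.sum_Ico_eq_sum_range] at h
  have e1 : J + p - 1 + 1 - (p-1) = J + 1 := by omega
  have e2 : J + p - 1 + 1 = J + p := by omega
  have e3 : p - 1 + 1 = p := by omega
  rw [e1, e2, e3] at h
  rw [← h]
  apply Finset.sum_congr rfl
  intro M _
  congr 1
  omega

lemma coeff_Gs_pow (q p : ℕ) (hp : 1 ≤ p) (a : ℕ) :
    PowerSeries.coeff (R := RR) a (Gs q ^ p) =
      if (q+1) ∣ a then (Nat.choose (a/(q+1)+p-1) (p-1) : RR) * uu ^ (a/(q+1)) else 0 := by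
  induction p generalizing a with
  | zero => omega
  | succ p ih =>
    rcases Nat.eq_zero_or_pos p with rfl | hp1
    · rw [zero_add, pow_one, coeff_Gs]
      split_ifs with h
      · norm_num
      · rfl
    · rw [pow_succ, mul_comm, PowerSeries.coeff_mul,
        Finset.Nat.sum_antidiagonal_eq_sum_range_succ_mk]
      have hterm : ∀ i, ¬ (q+1) ∣ i → PowerSeries.coeff (R := RR) i (Gs q) *
          PowerSeries.coeff (R := RR) (a - i) (Gs q ^ p) = 0 := by
        intro i hi; rw [coeff_Gs, if_neg hi, zero_mul]
      by_cases hda : (q+1) ∣ a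
      · rw [if_pos hda]
        set J := a/(q+1) with hJ
        have haJ : a = (q+1)*J := by rw [hJ, Nat.mul_div_cancel' hda]
        rw [sum_multiples (q+1) a (by omega) _ hterm]
        have : ∀ j ∈ range (J + 1), PowerSeries.coeff (R := RR) ((q+1)*j) (Gs q) *
            PowerSeries.coeff (R := RR) (a - (q+1)*j) (Gs q ^ p) =
            (Nat.choose ((J-j)+p-1) (p-1) : RR) * uu ^ J := by
          intro j hj
          simp only [Finset.mem_range] at hj
          have hjJ : j ≤ J := by omega
          have hsub : a - (q+1)*j = (q+1)*(J-j) := by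
            rw [haJ, ← Nat.mul_sub]
          rw [coeff_Gs, if_pos ⟨j, rfl⟩, Nat.mul_div_cancel_left _ (by omega), hsub,
            ih hp1 ((q+1)*(J-j)), if_pos ⟨J-j, rfl⟩, Nat.mul_div_cancel_left _ (by omega)]
          rw [mul_comm (uu^j), mul_assoc, ← pow_add]
          congr 2
          omega
        rw [Finset.sum_congr rfl this, ← Finset.sum_mul, ← Nat.cast_sum]
        have hsum : ∑ x ∈ range (J+1), Nat.choose (J - x + p - 1) (p-1)
            = Nat.choose (J+p) p := by
          rw [← Finset.sum_range_reflect]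
          have : ∀ M ∈ range (J+1), Nat.choose (J - (J + 1 - 1 - M) + p - 1) (p-1)
              = Nat.choose (M + p - 1) (p-1) := by
            intro M hM; simp only [Finset.mem_range] at hM; congr 2; omega
          rw [Finset.sum_congr rfl this, hockey p J hp1]
        rw [hsum]
        norm_num
      · rw [if_neg hda]
        apply Finset.sum_eq_zero
        intro i hi
        simp only [Finset.mem_range] at hi
        by_cases hdi : (q+1) ∣ i
        · rw [ih hp1 (a-i)]
          have : ¬ (q+1) ∣ (a - i) := by
            intro hc
            exact hda (by
              have : a = i + (a - i) := by omega
              rw [this]; exact Nat.dvd_add hdi hc)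
          rw [if_neg this, mul_zero]
        · exact hterm i hdi

lemma coeff_Hs_pow (q p n : ℕ) (hp : 1 ≤ p) :
    PowerSeries.coeff (R := RR) n (Hs q ^ p) =
      ∑ i ∈ range (p+1), if p + q*i ≤ n ∧ (q+1) ∣ (n - p - q*i) then
        (-1 : RR)^(p+i) * (Nat.choose p i : RR) *
          (Nat.choose ((n-p-q*i)/(q+1) + p - 1) (p-1) : RR) * uu ^ (i + (n-p-q*i)/(q+1))
      else 0 := by
  have hH : Hs q ^ p = PowerSeries.C (R := RR) ((-1)^p) *
      (PowerSeries.X^p * ((1 - PowerSeries.C (R := RR) uu * PowerSeries.X^q)^p * Gs q ^ p)) := by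
    have hc : PowerSeries.C (R := RR) ((-1)^p) = ((-1 : PowerSeries RR))^p := by
      rw [map_pow, map_neg, map_one]
    rw [hc, Hs_eq, neg_pow, mul_pow, mul_pow]
  rw [hH, PowerSeries.coeff_C_mul, PowerSeries.coeff_X_pow_mul']
  by_cases hpn : p ≤ n
  · rw [if_pos hpn]
    have hB : ((1 : PowerSeries RR) - PowerSeries.C (R := RR) uu * PowerSeries.X^q)^p
        = ∑ i ∈ range (p+1),
          PowerSeries.C (R := RR) ((-1)^i * uu^i * (Nat.choose p i : RR)) * PowerSeries.X^(q*i) := by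
      have h1 : (1 : PowerSeries RR) - PowerSeries.C (R := RR) uu * PowerSeries.X^q
          = (-(PowerSeries.C (R := RR) uu * PowerSeries.X^q)) + 1 := by ring
      rw [h1, add_pow]
      apply Finset.sum_congr rfl
      intro i _
      rw [one_pow, mul_one, neg_pow, mul_pow, ← map_pow, ← pow_mul]
      rw [show ((p.choose i : PowerSeries RR)) = PowerSeries.C (R := RR) ((p.choose i : RR)) from
        (map_natCast (PowerSeries.C (R := RR)) _).symm]
      rw [show ((-1 : PowerSeries RR)^i) = PowerSeries.C (R := RR) ((-1)^i) from by
        rw [map_pow, map_neg, map_one]]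
      simp only [map_mul]
      ring
    rw [hB, Finset.sum_mul, map_sum, Finset.mul_sum]
    apply Finset.sum_congr rfl
    intro i _
    rw [mul_assoc, PowerSeries.coeff_C_mul, PowerSeries.coeff_X_pow_mul', coeff_Gs_pow q p hp]
    by_cases hqi : q*i ≤ n - p
    · rw [if_pos hqi]
      by_cases hdvd : (q+1) ∣ (n - p - q*i)
      · rw [if_pos hdvd, if_pos ⟨by omega, hdvd⟩, pow_add, pow_add]
        ring
      · rw [if_neg hdvd, if_neg (by tauto), mul_zero, mul_zero]
    · rw [if_neg hqi, if_neg (by omega), mul_zero, mul_zero]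
  · rw [if_neg hpn, mul_zero]
    symm
    apply Finset.sum_eq_zero
    intro i _
    rw [if_neg (by omega)]

lemma geom_base {A : Type*} [CommRing A] (z : A) (N : ℕ) :
    (1+z) * (∑ r ∈ Finset.Icc 1 N, (-1 : A)^r * (Nat.choose (r-1) 0 : A) * z^r)
      = -z + z^(N+1) * ((-1 : A)^N) := by
  induction N with
  | zero => simp
  | succ N ih =>
    rw [Finset.sum_Icc_succ_top (by omega), mul_add, ih]
    simp only [Nat.choose_zero_right, Nat.cast_one, mul_one]
    ring

lemma rec_aux {A : Type*} [CommRing A] (z : A) (p : ℕ) (hp : 1 ≤ p) (N : ℕ) (hN : 1 ≤ N) :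
    (1+z) * (∑ r ∈ Finset.Icc 1 N, (-1 : A)^r * (Nat.choose (r-1) p : A) * z^r)
      = - (z * ∑ r ∈ Finset.Icc 1 (N-1), (-1 : A)^r * (Nat.choose (r-1) (p-1) : A) * z^r)
        + (-1 : A)^N * (Nat.choose (N-1) p : A) * z^(N+1) := by
  induction N with
  | zero => omega
  | succ N ih =>
    rcases Nat.eq_zero_or_pos N with rfl | hN1
    · simp [Nat.choose_eq_zero_of_lt hp]
    · rw [Finset.sum_Icc_succ_top (by omega : 1 ≤ N+1), mul_add, ih hN1]
      have e1 : N + 1 - 1 = N := by omega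
      rw [e1]
      obtain ⟨M, rfl⟩ : ∃ M, N = M+1 := ⟨N-1, by omega⟩
      rw [Finset.sum_Icc_succ_top (by omega : 1 ≤ M+1)]
      have e2 : (Nat.choose (M+1) p : A)
          = (Nat.choose M (p-1) : A) + (Nat.choose M p : A) := by
        rw [← Nat.cast_add]
        congr 1
        obtain ⟨P, rfl⟩ : ∃ P, p = P+1 := ⟨p-1, by omega⟩
        rw [show P+1-1 = P from rfl, Nat.choose_succ_succ]
      have e3 : M + 1 - 1 = M := by omega
      rw [e3, e2]
      ring

lemma geom_aux {A : Type*} [CommRing A] (z : A) (p : ℕ) (hp : 1 ≤ p) (N : ℕ) :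
    ∃ g : A, (1+z)^p * (∑ r ∈ Finset.Icc 1 N, (-1 : A)^r * (Nat.choose (r-1) (p-1) : A) * z^r)
      = (-z)^p + z^(N+1) * g := by
  induction p generalizing N with
  | zero => omega
  | succ p ih =>
    rcases Nat.eq_zero_or_pos p with rfl | hp1
    · exact ⟨(-1)^N, by rw [pow_one, pow_one, zero_add]; exact geom_base z N⟩
    · rcases Nat.eq_zero_or_pos N with rfl | hN1
      · refine ⟨-(-1 : A)^(p+1) * z^p, ?_⟩
        rw [Finset.Icc_eq_empty (by omega), Finset.sum_empty, mul_zero]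
        ring
      · obtain ⟨g', hg'⟩ := ih hp1 (N-1)
        refine ⟨-g' + (1+z)^p * (-1 : A)^N * (Nat.choose (N-1) p), ?_⟩
        have e0 : Nat.succ p - 1 = p := rfl
        have key : (1+z)^(p+1) * (∑ r ∈ Finset.Icc 1 N, (-1 : A)^r * (Nat.choose (r-1) p : A) * z^r)
            = (1+z)^p * ((1+z) * (∑ r ∈ Finset.Icc 1 N, (-1 : A)^r * (Nat.choose (r-1) p : A) * z^r)) := by
          ring
        rw [show p + 1 - 1 = p from rfl, key, rec_aux z p hp1 N hN1, mul_add, mul_neg,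
          ← mul_assoc, mul_comm ((1+z)^p) z, mul_assoc, hg']
        have eN : N - 1 + 1 = N := by omega
        rw [eN]
        ring

lemma constantCoeff_Ps (q : ℕ) : PowerSeries.constantCoeff (R := RR) (Ps q) = 0 := by
  have := coeff_Ps q 0
  rwa [PowerSeries.coeff_zero_eq_constantCoeff, if_pos rfl] at this

lemma bridge (q p n : ℕ) (hq : 1 ≤ q) (hp : 1 ≤ p) :
    PowerSeries.coeff (R := RR) n (∑ r ∈ Finset.Icc 1 n,
        (-1 : PowerSeries RR)^r * (Nat.choose (r-1) (p-1) : PowerSeries RR) * Ps q ^ r)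
      = PowerSeries.coeff (R := RR) n (Hs q ^ p) := by
  obtain ⟨g, hg⟩ := geom_aux (Ps q) p hp n
  have hH : ((1 : PowerSeries RR) + Ps q)^p * Hs q ^ p = (- Ps q)^p := by
    rw [← mul_pow, oneAdd_Ps_mul_Hs q hq]
  have hunit : IsUnit (((1 : PowerSeries RR) + Ps q)^p) := by
    apply IsUnit.pow
    rw [PowerSeries.isUnit_iff_constantCoeff, map_add, map_one, constantCoeff_Ps, add_zero]
    exact isUnit_one
  obtain ⟨U, hU⟩ := hunit
  have key : ((1 : PowerSeries RR) + Ps q)^p *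
      ((∑ r ∈ Finset.Icc 1 n, (-1 : PowerSeries RR)^r * (Nat.choose (r-1) (p-1) : PowerSeries RR)
        * Ps q ^ r) - Hs q ^ p) = Ps q ^ (n+1) * g := by
    rw [mul_sub, hg, hH]
    ring
  have hdvd : (PowerSeries.X : PowerSeries RR)^(n+1) ∣
      ((∑ r ∈ Finset.Icc 1 n, (-1 : PowerSeries RR)^r * (Nat.choose (r-1) (p-1) : PowerSeries RR)
        * Ps q ^ r) - Hs q ^ p) := by
    have hXP : (PowerSeries.X : PowerSeries RR) ∣ Ps q := by
      rw [PowerSeries.X_dvd_iff]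
      exact constantCoeff_Ps q
    have h1 : (PowerSeries.X : PowerSeries RR)^(n+1) ∣ Ps q ^ (n+1) * g :=
      Dvd.dvd.mul_right (pow_dvd_pow_of_dvd hXP (n+1)) g
    have h2 : ((∑ r ∈ Finset.Icc 1 n, (-1 : PowerSeries RR)^r
        * (Nat.choose (r-1) (p-1) : PowerSeries RR) * Ps q ^ r) - Hs q ^ p)
        = ↑U⁻¹ * (Ps q ^ (n+1) * g) := by
      rw [← key, ← mul_assoc, ← hU]
      rw [Units.inv_mul]
      rw [one_mul]
    rw [h2]
    exact Dvd.dvd.mul_left h1 _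
  have := (PowerSeries.X_pow_dvd_iff.mp hdvd) n (by omega)
  rw [map_sub] at this
  exact sub_eq_zero.mp this

lemma coeff_Ps_pow_eq (q n r : ℕ) :
    PowerSeries.coeff (R := RR) n (Ps q ^ r) =
      ∑ c ∈ compositions n r, Polynomial.X ^ ((Finset.univ.filter fun i => q < c i).card) := by
  rw [PowerSeries.coeff_pow]
  rw [← Finset.sum_filter_of_ne (p := fun l => ∀ i ∈ range r, l i ≠ 0) (by
    intro l _ hl
    by_contra hc
    push_neg at hc
    obtain ⟨i, hi, hi0⟩ := hc
    exact hl (Finset.prod_eq_zero hi (by rw [coeff_Ps, if_pos hi0])))]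
  apply Finset.sum_nbij' (fun l => fun (i : Fin r) => l i.val)
    (fun c => Finsupp.onFinset (range r) (fun i => if h : i < r then c ⟨i, h⟩ else 0)
      (by intro i hi; simp only [Finset.mem_range]; by_contra hc; simp [hc] at hi))
  · intro l hl
    simp only [Finset.mem_filter, Finset.mem_finsuppAntidiag] at hl
    obtain ⟨⟨hsum, hsupp⟩, hpos⟩ := hl
    have hsum' : ∑ i : Fin r, l i.val = n := by
      rw [← Finset.sum_range (fun i => l i)]; exact hsum
    simp only [compositions, Finset.mem_filter, Fintype.mem_piFinset, Finset.mem_range]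
    refine ⟨fun i => ?_, fun i => Nat.pos_of_ne_zero (hpos i.val (by simp [i.isLt])), hsum'⟩
    have : l i.val ≤ n := by
      rw [← hsum']
      exact Finset.single_le_sum (f := fun j : Fin r => l j.val) (fun _ _ => Nat.zero_le _)
        (Finset.mem_univ i)
    omega
  · intro c hc
    simp only [compositions, Finset.mem_filter, Fintype.mem_piFinset, Finset.mem_range] at hc
    obtain ⟨hbd, hpos, hsum⟩ := hc
    simp only [Finset.mem_filter, Finset.mem_finsuppAntidiag]
    refine ⟨⟨?_, ?_⟩, ?_⟩
    · rw [← hsum]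
      change ∑ i ∈ range r, (fun i => if h : i < r then c ⟨i, h⟩ else 0) i = _
      rw [Finset.sum_range (fun i => if h : i < r then c ⟨i, h⟩ else 0)]
      apply Finset.sum_congr rfl
      intro i _
      simp [i.isLt]
    · exact Finsupp.support_onFinset_subset
    · intro i hi
      simp only [Finset.mem_range] at hi
      simp only [Finsupp.onFinset_apply, dif_pos hi]
      have := hpos ⟨i, hi⟩
      omega
  · intro l hl
    apply Finsupp.ext
    intro i
    simp only [Finsupp.onFinset_apply]
    by_cases h : i < r
    · rw [dif_pos h]
    · rw [dif_neg h]
      simp only [Finset.mem_filter, Finset.mem_finsuppAntidiag] at hl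
      have := hl.1.2
      by_contra hne
      have : i ∈ l.support := Finsupp.mem_support_iff.mpr (Ne.symm (by omega))
      have := hl.1.2 this
      simp only [Finset.mem_range] at this
      omega
  · intro c hc
    funext i
    simp [i.isLt]
  · intro l hl
    simp only [Finset.mem_filter, Finset.mem_finsuppAntidiag] at hl
    have hterm : ∀ i ∈ range r, PowerSeries.coeff (R := RR) (l i) (Ps q)
        = if q < l i then Polynomial.X else 1 := by
      intro i hi
      rw [coeff_Ps, if_neg (hl.2 i hi)]
      by_cases h : q < l i
      · rw [if_neg (by omega), if_pos h]
      · rw [if_pos (by omega), if_neg h]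
    rw [Finset.prod_congr rfl hterm]
    rw [Finset.prod_range (fun i => if q < l i then Polynomial.X else (1:RR))]
    rw [← Finset.prod_filter]
    rw [Finset.prod_const]

lemma hm_eq (n q r m : ℕ) :
    (hm n q r m : ℤ) = ∑ k ∈ range (m+1), Polynomial.coeff (PowerSeries.coeff (R := RR) n (Ps q ^ r)) k := by
  rw [coeff_Ps_pow_eq]
  have : ∀ k ∈ range (m+1), Polynomial.coeff
      (∑ c ∈ compositions n r, (Polynomial.X : RR) ^ ((Finset.univ.filter fun i => q < c i).card)) k
      = ∑ c ∈ compositions n r,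
        (if ((Finset.univ.filter fun i => q < c i).card) = k then 1 else 0) := by
    intro k _
    rw [Polynomial.finset_sum_coeff]
    apply Finset.sum_congr rfl
    intro c _
    rw [Polynomial.coeff_X_pow]
    simp [eq_comm]
  rw [Finset.sum_congr rfl this, Finset.sum_comm]
  have : ∀ c ∈ compositions n r, (∑ k ∈ range (m+1),
      if ((Finset.univ.filter fun i => q < c i).card) = k then (1:ℤ) else 0)
      = if ((Finset.univ.filter fun i => q < c i).card) ≤ m then 1 else 0 := by
    intro c _
    rw [Finset.sum_ite_eq (range (m+1))]
    simp [Nat.lt_succ_iff]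
  rw [Finset.sum_congr rfl this, hm, ← Finset.sum_filter, Finset.sum_const]
  simp

lemma coeff_uu_pow (J k : ℕ) : (uu^J).coeff k = (-1:ℤ)^k * (Nat.choose J k : ℤ) := by
  have huu : uu = (-Polynomial.X) + 1 := by rw [uu]; ring
  rw [huu, add_pow, Polynomial.finset_sum_coeff]
  have : ∀ i ∈ range (J+1), ((-Polynomial.X)^i * 1^(J-i) * (Nat.choose J i : RR)).coeff k
      = if i = k then (-1:ℤ)^k * (Nat.choose J k : ℤ) else 0 := by
    intro i _
    rw [one_pow, mul_one, neg_pow, mul_comm ((-1:RR)^i), mul_assoc]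
    rw [show ((-1 : RR)^i) = Polynomial.C ((-1:ℤ)^i) from by rw [map_pow, map_neg, map_one]]
    rw [show ((J.choose i : RR)) = Polynomial.C ((J.choose i : ℤ)) from by simp]
    rw [mul_comm (Polynomial.X ^ i), ← map_mul, Polynomial.coeff_C_mul,
      Polynomial.coeff_X_pow]
    by_cases h : i = k
    · subst h; simp [mul_comm]
    · rw [if_neg (by omega : ¬ k = i), mul_zero, if_neg h]
  rw [Finset.sum_congr rfl this, Finset.sum_ite_eq' (range (J+1))]
  by_cases h : k ∈ range (J+1)
  · rw [if_pos h]
  · rw [if_neg h]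
    simp only [Finset.mem_range] at h
    rw [Nat.choose_eq_zero_of_lt (by omega)]
    simp

lemma alt_sum (m J : ℕ) :
    ∑ k ∈ range (m+1), (-1:ℤ)^k * (Nat.choose J k : ℤ)
      = if J = 0 then 1 else (-1:ℤ)^m * (Nat.choose (J-1) m : ℤ) := by
  induction m with
  | zero =>
    simp only [range_one, Finset.sum_singleton, pow_zero, Nat.choose_zero_right, Nat.cast_one,
      one_mul, mul_one]
    split_ifs <;> simp
  | succ m ih =>
    rw [Finset.sum_range_succ, ih]
    by_cases hJ : J = 0
    · subst hJ
      rw [if_pos rfl, if_pos rfl, Nat.choose_eq_zero_of_lt (by omega)]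
      simp
    · rw [if_neg hJ, if_neg hJ]
      obtain ⟨J', rfl⟩ : ∃ J', J = J'+1 := ⟨J-1, by omega⟩
      rw [show J'+1-1 = J' from rfl, Nat.choose_succ_succ]
      push_cast
      ring

lemma lhs_eval (n q m p : ℕ) (hq : 1 ≤ q) (hp : 1 ≤ p) :
    ∑ r ∈ Finset.Icc 1 n, (-1 : ℤ)^r * ((r-1).choose (p-1) : ℤ) * (hm n q r m : ℤ)
    = ∑ i ∈ range (p+1), if p + q*i ≤ n ∧ (q+1) ∣ (n - p - q*i) then
        (-1:ℤ)^(p+i) * (p.choose i : ℤ) * (((n-p-q*i)/(q+1) + p - 1).choose (p-1) : ℤ) *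
          (if i + (n-p-q*i)/(q+1) = 0 then 1
           else (-1:ℤ)^m * (((i + (n-p-q*i)/(q+1)) - 1).choose m : ℤ))
      else 0 := by
  have hconst : ∀ r : ℕ, ((-1:RR)^r * ((r-1).choose (p-1) : RR))
      = Polynomial.C ((-1:ℤ)^r * ((r-1).choose (p-1):ℤ)) := by
    intro r
    rw [map_mul, map_pow, map_neg, map_one, map_natCast]
  have step1 : ∀ r : ℕ, (-1 : ℤ)^r * ((r-1).choose (p-1) : ℤ) * (hm n q r m : ℤ)
      = ∑ k ∈ range (m+1), Polynomial.coeff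
          (((-1:RR)^r * ((r-1).choose (p-1) : RR)) * PowerSeries.coeff (R := RR) n (Ps q ^ r)) k := by
    intro r
    rw [hm_eq, Finset.mul_sum]
    apply Finset.sum_congr rfl
    intro k _
    rw [hconst, Polynomial.coeff_C_mul]
  rw [Finset.sum_congr rfl (fun r _ => step1 r), Finset.sum_comm]
  have step2 : ∀ k ∈ range (m+1),
      (∑ r ∈ Finset.Icc 1 n, Polynomial.coeff
        (((-1:RR)^r * ((r-1).choose (p-1) : RR)) * PowerSeries.coeff (R := RR) n (Ps q ^ r)) k)
      = Polynomial.coeff (PowerSeries.coeff (R := RR) n (Hs q ^ p)) k := by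
    intro k _
    rw [← Polynomial.finset_sum_coeff]
    congr 1
    rw [← bridge q p n hq hp, map_sum]
    apply Finset.sum_congr rfl
    intro r _
    have : ((-1 : PowerSeries RR)^r * ((r-1).choose (p-1) : PowerSeries RR))
        = PowerSeries.C (R := RR) ((-1:RR)^r * ((r-1).choose (p-1) : RR)) := by
      rw [map_mul, map_pow, map_neg, map_one, map_natCast]
    rw [mul_assoc, this, PowerSeries.coeff_C_mul]
    ring
  rw [Finset.sum_congr rfl step2]
  have step3 : ∀ k, Polynomial.coeff (PowerSeries.coeff (R := RR) n (Hs q ^ p)) k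
      = ∑ i ∈ range (p+1), if p + q*i ≤ n ∧ (q+1) ∣ (n - p - q*i) then
          (-1:ℤ)^(p+i) * (p.choose i : ℤ) * (((n-p-q*i)/(q+1) + p - 1).choose (p-1) : ℤ) *
            ((uu ^ (i + (n-p-q*i)/(q+1))).coeff k)
        else 0 := by
    intro k
    rw [coeff_Hs_pow q p n hp, Polynomial.finset_sum_coeff]
    apply Finset.sum_congr rfl
    intro i _
    split_ifs with h
    · have e : ((-1 : RR)^(p+i) * (p.choose i : RR) * (((n-p-q*i)/(q+1) + p - 1).choose (p-1) : RR))
            * uu ^ (i + (n-p-q*i)/(q+1))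
          = Polynomial.C ((-1:ℤ)^(p+i) * (p.choose i : ℤ)
              * (((n-p-q*i)/(q+1) + p - 1).choose (p-1) : ℤ)) * uu ^ (i + (n-p-q*i)/(q+1)) := by
        rw [map_mul, map_mul, map_pow, map_neg, map_one, map_natCast, map_natCast]
      rw [e, Polynomial.coeff_C_mul]
    · simp
  rw [Finset.sum_congr rfl (fun k _ => step3 k), Finset.sum_comm]
  apply Finset.sum_congr rfl
  intro i _
  by_cases h : p + q*i ≤ n ∧ (q+1) ∣ (n - p - q*i)
  · simp only [if_pos h]
    rw [← Finset.mul_sum]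
    congr 1
    have e2 : ∀ k ∈ range (m+1), (uu ^ (i + (n-p-q*i)/(q+1))).coeff k
        = (-1:ℤ)^k * ((i + (n-p-q*i)/(q+1)).choose k : ℤ) :=
      fun k _ => coeff_uu_pow _ k
    rw [Finset.sum_congr rfl e2, alt_sum]
  · simp only [if_neg h, Finset.sum_const_zero]

lemma neg_one_pow_congr' (a b : ℕ) (h : a % 2 = b % 2) : (-1:ℤ)^a = (-1)^b := by
  conv_lhs => rw [← Nat.div_add_mod a 2]
  conv_rhs => rw [← Nat.div_add_mod b 2]
  rw [pow_add, pow_add, pow_mul, pow_mul, neg_one_sq, one_pow, one_pow, h]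


/-- For `q ≥ 1` and `1 ≤ p ≤ n`,
`∑_{r=1}^{n} (-1)^r C(r-1, p-1) h_m(n, q, r)
  = ∑_{j=⌈(n-p)/(q+1)⌉}^{⌊(n-p)/q⌋} (-1)^{n+m+qj+j} C(j-1, m) C(n-qj-1, p-1) C(p, n-qj-j)`,
with the `j = 0` term (which occurs only when `p = n`) interpreted via the convention
`(-1)^j C(j-1, m) |_{j=0} = (-1)^m`. -/
theorem stmt_12 (n q m p : ℕ) (hq : 1 ≤ q) (hp : 1 ≤ p) (hpn : p ≤ n) :
    ∑ r ∈ Finset.Icc 1 n,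
        (-1 : ℤ) ^ r * ((r - 1).choose (p - 1) : ℤ) * (hm n q r m : ℤ) =
      ∑ j ∈ Finset.Icc ((n - p + q) / (q + 1)) ((n - p) / q),
        (-1 : ℤ) ^ (n + m + q * j + j) *
          (if j = 0 then (-1 : ℤ) ^ m else (((j - 1).choose m : ℕ) : ℤ)) *
          chZ ((n : ℤ) - q * j - 1) ((p : ℤ) - 1) *
          chZ (p : ℤ) ((n : ℤ) - q * j - j) := by
  rw [lhs_eval n q m p hq hp]
  have hq1 : 0 < q + 1 := by omega
  have hlo : ∀ j : ℕ, (n - p + q)/(q+1) ≤ j ↔ n - p ≤ (q+1)*j := by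
    intro j
    rw [Nat.div_le_iff_le_mul_add_pred hq1]
    omega
  have hhi : ∀ j : ℕ, j ≤ (n-p)/q ↔ q*j ≤ n - p := by
    intro j
    rw [Nat.le_div_iff_mul_le (by omega : 0 < q)]
    have : j * q = q * j := by ring
    omega
  have hrhs : ∑ j ∈ Finset.Icc ((n - p + q) / (q + 1)) ((n - p) / q),
        (-1 : ℤ) ^ (n + m + q * j + j) *
          (if j = 0 then (-1 : ℤ) ^ m else (((j - 1).choose m : ℕ) : ℤ)) *
          chZ ((n : ℤ) - q * j - 1) ((p : ℤ) - 1) *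
          chZ (p : ℤ) ((n : ℤ) - q * j - j)
      = ∑ j ∈ (Finset.Icc ((n - p + q) / (q + 1)) ((n - p) / q)).filter
            (fun j => (q+1)*j ≤ n),
          (-1 : ℤ) ^ (n + m + q * j + j) *
            (if j = 0 then (-1 : ℤ) ^ m else (((j - 1).choose m : ℕ) : ℤ)) *
            chZ ((n : ℤ) - q * j - 1) ((p : ℤ) - 1) *
            chZ (p : ℤ) ((n : ℤ) - q * j - j) := by
    symm
    apply Finset.sum_subset (Finset.filter_subset _ _)
    intro j hj hnot
    simp only [Finset.mem_filter, hj, true_and, not_le] at hnot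
    have hz : chZ (p : ℤ) ((n : ℤ) - q * j - j) = 0 := by
      rw [chZ, if_neg]
      rintro ⟨h1, h2⟩
      have hc : ((q:ℤ)+1) * j = q*j + j := by ring
      have hc2 : (((q+1)*j : ℕ) : ℤ) = ((q:ℤ)+1) * j := by push_cast; ring
      omega
    rw [hz, mul_zero]
  rw [hrhs, ← Finset.sum_filter]
  apply Finset.sum_nbij' (fun i => i + (n - p - q*i)/(q+1)) (fun j => (q+1)*j - (n - p))
  · intro i hi
    simp only [Finset.mem_filter, Finset.mem_range] at hi
    obtain ⟨hip, hcond1, M, hM⟩ := hi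
    have hMdiv : (n - p - q*i)/(q+1) = M := by rw [hM, Nat.mul_div_cancel_left _ hq1]
    have hL1 : n = p + q*i + (q+1)*M := by omega
    have hE1 : (q+1)*(i+M) = q*i + i + (q+1)*M := by ring
    have hE2 : q*(i+M) = q*i + q*M := by ring
    have hE3 : (q+1)*M = q*M + M := by ring
    simp only [Finset.mem_filter, Finset.mem_Icc, hlo, hhi, hMdiv]
    omega
  · intro j hj
    simp only [Finset.mem_filter, Finset.mem_Icc, hlo, hhi] at hj
    obtain ⟨⟨hj1, hj2⟩, hj3⟩ := hj
    have hE : (q+1)*j = q*j + j := by ring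
    simp only [Finset.mem_filter, Finset.mem_range]
    set i := (q+1)*j - (n-p) with hidef
    set M := n - (q*j + p) with hMdef
    have hiM : i + M = j := by omega
    have hqi : q*j = q*i + q*M := by rw [← hiM]; ring
    have hE3 : (q+1)*M = q*M + M := by ring
    refine ⟨by omega, by omega, ⟨M, by omega⟩⟩
  · intro i hi
    simp only [Finset.mem_filter, Finset.mem_range] at hi
    obtain ⟨hip, hcond1, M, hM⟩ := hi
    have hMdiv : (n - p - q*i)/(q+1) = M := by rw [hM, Nat.mul_div_cancel_left _ hq1]
    rw [hMdiv]
    have hE1 : (q+1)*(i+M) = q*i + i + (q+1)*M := by ring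
    omega
  · intro j hj
    simp only [Finset.mem_filter, Finset.mem_Icc, hlo, hhi] at hj
    obtain ⟨⟨hj1, hj2⟩, hj3⟩ := hj
    have hE : (q+1)*j = q*j + j := by ring
    set i := (q+1)*j - (n-p) with hidef
    set M := n - (q*j + p) with hMdef
    have hiM : i + M = j := by omega
    have hqi : q*j = q*i + q*M := by rw [← hiM]; ring
    have hE3 : (q+1)*M = q*M + M := by ring
    have hval : n - p - q*i = (q+1)*M := by omega
    rw [hval, Nat.mul_div_cancel_left _ hq1]
    omega
  · intro i hi
    simp only [Finset.mem_filter, Finset.mem_range] at hi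
    obtain ⟨hip, hcond1, M, hM⟩ := hi
    have hMdiv : (n - p - q*i)/(q+1) = M := by rw [hM, Nat.mul_div_cancel_left _ hq1]
    rw [hMdiv]
    have hL1 : n = p + q*i + (q+1)*M := by omega
    have hE1 : (q+1)*(i+M) = q*i + i + (q+1)*M := by ring
    have hE2 : q*(i+M) = q*i + q*M := by ring
    have hE3 : (q+1)*M = q*M + M := by ring
    have hn_eq : n = q*(i+M) + p + M := by omega
    have hcast : (n:ℤ) = (q:ℤ)*((i:ℤ)+(M:ℤ)) + (p:ℤ) + (M:ℤ) := by exact_mod_cast hn_eq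
    have hcastj : ((↑(i+M) : ℤ)) = (i:ℤ) + (M:ℤ) := by push_cast; ring
    have c1 : chZ ((n : ℤ) - q * (↑(i+M)) - 1) ((p : ℤ) - 1)
        = (((M + p - 1).choose (p-1) : ℕ) : ℤ) := by
      rw [chZ, if_pos (by rw [hcastj]; constructor <;> omega)]
      have t1 : ((n:ℤ) - q*(↑(i+M)) - 1).toNat = M + p - 1 := by rw [hcastj]; omega
      have t2 : ((p:ℤ) - 1).toNat = p - 1 := by omega
      rw [t1, t2]
    have c2 : chZ (p : ℤ) ((n : ℤ) - q * (↑(i+M)) - (↑(i+M)))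
        = ((p.choose i : ℕ) : ℤ) := by
      rw [chZ, if_pos (by rw [hcastj]; constructor <;> omega)]
      have t1 : ((n : ℤ) - q * (↑(i+M)) - (↑(i+M))).toNat = p - i := by rw [hcastj]; omega
      have t2 : ((p:ℤ)).toNat = p := by omega
      rw [t1, t2]
      congr 1
      rw [show p - i = p - i from rfl]
      exact Nat.choose_symm (by omega)
    rw [c1, c2]
    have hsign : (-1:ℤ)^(n+m+q*(i+M)+(i+M)) *
        (if i + M = 0 then (-1:ℤ)^m else (((i+M-1).choose m : ℕ) : ℤ))
        = (-1:ℤ)^(p+i) *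
          (if i + M = 0 then 1 else (-1:ℤ)^m * (((i+M-1).choose m : ℕ) : ℤ)) := by
      by_cases h0 : i + M = 0
      · rw [if_pos h0, if_pos h0, mul_one, ← pow_add]
        have hq0 : q*(i+M) = 0 := by rw [h0, Nat.mul_zero]
        apply neg_one_pow_congr'
        omega
      · rw [if_neg h0, if_neg h0, ← mul_assoc, ← pow_add]
        have : (-1:ℤ)^(n+m+q*(i+M)+(i+M)) = (-1:ℤ)^(p+i+m) := by
          apply neg_one_pow_congr'
          omega
        rw [this]
    linear_combination (-((((M + p - 1).choose (p-1) : ℕ) : ℤ) * (((p.choose i : ℕ)) : ℤ))) * hsign
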